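/- The Two-Stage Luce model can violate regularity: there exist an attractiveness function, a threshold, and two nested assortments S ⊂ T such that the probability of choosing a fixed product under the Threshold Luce model is strictly larger on the bigger set T than on S. Concretely, with products {1,2,3,4}, attractiveness a₁=5, a₂=4, a₃=3, a₄=3, outside option a₀=1, and threshold t=0.4, the choice probability of product 2 from {2,3,4} is 4/11, while from {1,2,3,4} it is 4/10, and 4/10 > 4/11. -/

import Mathlib

open Classical

/-- The Two-Stage Luce model can violate regularity: with products `{1,2,3,4}` having
attractiveness `5,4,3,3`, outside option `1` and threshold `0.4`, the probability of
choosing product 2 (index `1`) from `{2,3,4}` is `4/11`, while from `{1,2,3,4}` it is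
`4/10 > 4/11`. -/
theorem twoStageLuce_regularity_violation :
    ∃ (a : Fin 4 → ℝ) (a0 t : ℝ) (S T : Finset (Fin 4)),
      (∀ i, 0 < a i) ∧ 0 < a0 ∧ 0 < t ∧ S ⊂ T ∧
      a 0 = 5 ∧ a 1 = 4 ∧ a 2 = 3 ∧ a 3 = 3 ∧ a0 = 1 ∧ t = 0.4 ∧
      S = {1, 2, 3} ∧ T = {0, 1, 2, 3} ∧
      (let c : Finset (Fin 4) → Finset (Fin 4) := fun A =>
        A.filter (fun y => ¬ ∃ x ∈ A, a x > (1 + t) * a y)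
       let ρ : Fin 4 → Finset (Fin 4) → ℝ := fun x A =>
        if x ∈ c A then a x / ((∑ y ∈ c A, a y) + a0) else 0
       ρ 1 S = 4 / 11 ∧ ρ 1 T = 4 / 10 ∧ ρ 1 S < ρ 1 T) := by
  refine ⟨![5, 4, 3, 3], 1, 0.4, {1, 2, 3}, {0, 1, 2, 3}, ?_, by norm_num, by norm_num,
    ?_, rfl, rfl, rfl, rfl, rfl, rfl, rfl, rfl, ?_⟩
  · intro i; fin_cases i <;> norm_num
  · exact Finset.ssubset_insert (by decide)
  · norm_num [Finset.sum_filter, Finset.mem_filter, Finset.mem_insert, Finset.mem_singleton,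
      Finset.sum_insert, Finset.sum_singleton, Fin.forall_fin_succ,
      Matrix.cons_val_zero, Matrix.cons_val_one, Matrix.head_cons, Fin.forall_fin_zero_pi]
    have e1 : ∀ f : Fin 4 → ℝ, ∑ x ∈ ({1, 2, 3} : Finset (Fin 4)), f x = f 1 + f 2 + f 3 := by
      intro f
      rw [Finset.sum_insert (by decide), Finset.sum_insert (by decide), Finset.sum_singleton]
      ring
    have e2 : ∀ f : Fin 4 → ℝ,
        ∑ x ∈ ({0, 1, 2, 3} : Finset (Fin 4)), f x = f 0 + f 1 + f 2 + f 3 := by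
      intro f
      rw [Finset.sum_insert (by decide), Finset.sum_insert (by decide),
        Finset.sum_insert (by decide), Finset.sum_singleton]
      ring
    rw [e1, e2]
    have h3 : ((3 : Fin 4) : ℕ) = 3 := rfl
    simp
    norm_num
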